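/- If τ > 0 satisfies the CFL condition, then ‖(τ/2)M_σ‖₂ < 1 for each σ = 1, 2, 3, where ‖·‖₂ denotes the spectral norm. -/

import Mathlib

open Matrix
open scoped Kronecker

noncomputable section

namespace Kawarada

/-- The spectral norm (largest singular value) of a real matrix:
the operator norm of the induced map between Euclidean spaces. -/
noncomputable def specNorm {m : Type*} [Fintype m] [DecidableEq m]
    (A : Matrix m m ℝ) : ℝ :=
  ‖LinearMap.toContinuousLinearMap (Matrix.toEuclideanLin A)‖

/-- The `N × N` tridiagonal matrix `T` built from mesh steps `h 0, …, h N`.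
Lean row/column index `i : Fin N` corresponds to the paper's index `i + 1`. -/
noncomputable def tridiag (N : ℕ) (h : ℕ → ℝ) : Matrix (Fin N) (Fin N) ℝ :=
  Matrix.of fun i p =>
    if (i : ℕ) = (p : ℕ) then -2 / (h i * h ((i : ℕ) + 1))
    else if (i : ℕ) = (p : ℕ) + 1 then 2 / (h i * (h i + h ((i : ℕ) + 1)))
    else if (p : ℕ) = (i : ℕ) + 1 then 2 / (h ((i : ℕ) + 1) * (h i + h ((i : ℕ) + 1)))
    else 0

/-- `φ_{i,j,k}` for the paper's indices `i,j,k ≥ 1`. -/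
noncomputable def phi (a b c q : ℝ) (h1 h2 h3 : ℕ → ℝ) (i j k : ℕ) : ℝ :=
  (a ^ 2 * (∑ ℓ ∈ Finset.range i, h1 ℓ) ^ 2 +
      b ^ 2 * (∑ ℓ ∈ Finset.range j, h2 ℓ) ^ 2 +
      c ^ 2 * (∑ ℓ ∈ Finset.range k, h3 ℓ) ^ 2) ^ (q / 2)

/-- Index type for the vectorization: `i` (the `Fin N1` component) varies fastest. -/
abbrev Idx (N1 N2 N3 : ℕ) := Fin N3 × Fin N2 × Fin N1

/-- `φ` as a function of the vectorized index. -/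
noncomputable def phiVec (N1 N2 N3 : ℕ) (a b c q : ℝ) (h1 h2 h3 : ℕ → ℝ)
    (p : Idx N1 N2 N3) : ℝ :=
  phi a b c q h1 h2 h3 ((p.2.2 : ℕ) + 1) ((p.2.1 : ℕ) + 1) ((p.1 : ℕ) + 1)

/-- The diagonal matrix `B` with entries `φ_{i,j,k}⁻¹`. -/
noncomputable def Bdiag (N1 N2 N3 : ℕ) (a b c q : ℝ) (h1 h2 h3 : ℕ → ℝ) :
    Matrix (Idx N1 N2 N3) (Idx N1 N2 N3) ℝ :=
  Matrix.diagonal fun p => (phiVec N1 N2 N3 a b c q h1 h2 h3 p)⁻¹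

/-- The matrices `M1, M2, M3`. -/
noncomputable def Mmat (N1 N2 N3 : ℕ) (a b c q : ℝ) (h1 h2 h3 : ℕ → ℝ) :
    Fin 3 → Matrix (Idx N1 N2 N3) (Idx N1 N2 N3) ℝ :=
  ![(a ^ 2)⁻¹ •
      (Bdiag N1 N2 N3 a b c q h1 h2 h3 *
        ((1 : Matrix (Fin N3) (Fin N3) ℝ) ⊗ₖ
          ((1 : Matrix (Fin N2) (Fin N2) ℝ) ⊗ₖ tridiag N1 h1))),
    (b ^ 2)⁻¹ •
      (Bdiag N1 N2 N3 a b c q h1 h2 h3 *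
        ((1 : Matrix (Fin N3) (Fin N3) ℝ) ⊗ₖ
          (tridiag N2 h2 ⊗ₖ (1 : Matrix (Fin N1) (Fin N1) ℝ)))),
    (c ^ 2)⁻¹ •
      (Bdiag N1 N2 N3 a b c q h1 h2 h3 *
        (tridiag N3 h3 ⊗ₖ
          ((1 : Matrix (Fin N2) (Fin N2) ℝ) ⊗ₖ (1 : Matrix (Fin N1) (Fin N1) ℝ))))]

/-- The minimum of the mesh steps `h σ j`, `j = 0, …, N`, in one direction. -/
noncomputable def dirMin (N : ℕ) (h : ℕ → ℝ) : ℝ :=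
  (Finset.range (N + 1)).inf' Finset.nonempty_range_add_one h

/-- The maximum of the mesh steps in one direction. -/
noncomputable def dirMax (N : ℕ) (h : ℕ → ℝ) : ℝ :=
  (Finset.range (N + 1)).sup' Finset.nonempty_range_add_one h

/-- `h = min{h_{σ,j}}`, the global minimal mesh step. -/
noncomputable def meshMin (N1 N2 N3 : ℕ) (h1 h2 h3 : ℕ → ℝ) : ℝ :=
  min (dirMin N1 h1) (min (dirMin N2 h2) (dirMin N3 h3))

/-- `H = max{h_{σ,j}}`, the global maximal mesh step. -/
noncomputable def meshMax (N1 N2 N3 : ℕ) (h1 h2 h3 : ℕ → ℝ) : ℝ :=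
  max (dirMax N1 h1) (max (dirMax N2 h2) (dirMax N3 h3))

/-- `β_min = (h²/2)(a² h_{1,0}² + b² h_{2,0}² + c² h_{3,0}²)^{q/2}`. -/
noncomputable def betaMin (N1 N2 N3 : ℕ) (a b c q : ℝ) (h1 h2 h3 : ℕ → ℝ) : ℝ :=
  meshMin N1 N2 N3 h1 h2 h3 ^ 2 / 2 *
    (a ^ 2 * h1 0 ^ 2 + b ^ 2 * h2 0 ^ 2 + c ^ 2 * h3 0 ^ 2) ^ (q / 2)

/-- The CFL condition `τ/β_min < min{a², b², c²}`. -/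
def CFL (N1 N2 N3 : ℕ) (a b c q : ℝ) (h1 h2 h3 : ℕ → ℝ) (τ : ℝ) : Prop :=
  τ / betaMin N1 N2 N3 a b c q h1 h2 h3 < min (a ^ 2) (min (b ^ 2) (c ^ 2))

/-- `φ_min = min φ_{i,j,k}` (for the grid-sizes `nσ + 2 ≥ 2`). -/
noncomputable def phiMin (n1 n2 n3 : ℕ) (a b c q : ℝ) (h1 h2 h3 : ℕ → ℝ) : ℝ :=
  Finset.univ.inf' Finset.univ_nonempty
    (phiVec (n1 + 2) (n2 + 2) (n3 + 2) a b c q h1 h2 h3)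

/-- The nonlinear source term `g`, acting componentwise: `g(v)_p = f(v_p)/φ_p`. -/
noncomputable def gvec (N1 N2 N3 : ℕ) (a b c q : ℝ) (h1 h2 h3 : ℕ → ℝ) (f : ℝ → ℝ)
    (v : Idx N1 N2 N3 → ℝ) : Idx N1 N2 N3 → ℝ :=
  fun p => f (v p) / phiVec N1 N2 N3 a b c q h1 h2 h3 p

/-- The LOD propagator
`Φ(τ) = ∏_{σ=1}^3 (I − (τ/2)M_σ)⁻¹ (I + (τ/2)M_σ)`. -/
noncomputable def Phi (N1 N2 N3 : ℕ) (a b c q : ℝ) (h1 h2 h3 : ℕ → ℝ) (τ : ℝ) :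
    Matrix (Idx N1 N2 N3) (Idx N1 N2 N3) ℝ :=
  (1 - (τ / 2) • Mmat N1 N2 N3 a b c q h1 h2 h3 0)⁻¹ *
    (1 + (τ / 2) • Mmat N1 N2 N3 a b c q h1 h2 h3 0) *
  ((1 - (τ / 2) • Mmat N1 N2 N3 a b c q h1 h2 h3 1)⁻¹ *
    (1 + (τ / 2) • Mmat N1 N2 N3 a b c q h1 h2 h3 1)) *
  ((1 - (τ / 2) • Mmat N1 N2 N3 a b c q h1 h2 h3 2)⁻¹ *
    (1 + (τ / 2) • Mmat N1 N2 N3 a b c q h1 h2 h3 2))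

theorem isHermitian_symPart {m : Type*} [Fintype m] (A : Matrix m m ℝ) :
    (((2 : ℝ)⁻¹ • (A + Aᵀ))).IsHermitian := by
  show _ᴴ = _
  ext i j
  simp [Matrix.conjTranspose_apply, Matrix.transpose_apply, Matrix.add_apply]
  ring

/-- The logarithmic norm associated with the spectral norm:
`μ(A) = λ_max((A + Aᵀ)/2)`. -/
noncomputable def logNorm {m : Type*} [Fintype m] [DecidableEq m]
    (A : Matrix m m ℝ) : ℝ :=
  ⨆ i, (isHermitian_symPart A).eigenvalues i

/-- The Euclidean (`ℓ²`) norm of a vector. -/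
noncomputable def vecNorm {m : Type*} [Fintype m] (x : m → ℝ) : ℝ :=
  Real.sqrt (∑ i, x i ^ 2)


lemma specNorm_le_of_bounds {m : Type*} [Fintype m] [DecidableEq m]
    (A : Matrix m m ℝ) (R : ℝ) (hR : 0 ≤ R)
    (hrow : ∀ i, ∑ j, |A i j| ≤ R) (hcol : ∀ j, ∑ i, |A i j| ≤ R) :
    specNorm A ≤ R := by
  apply ContinuousLinearMap.opNorm_le_bound _ hR
  intro x
  simp only [LinearMap.coe_toContinuousLinearMap']
  have happ : ∀ i, Matrix.toEuclideanLin A x i = ∑ j, A i j * x j := by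
    intro i
    simp [Matrix.toEuclideanLin_apply, Matrix.mulVec, dotProduct]
  have hnorm : ‖Matrix.toEuclideanLin A x‖ = Real.sqrt (∑ i, (∑ j, A i j * x j)^2) := by
    rw [EuclideanSpace.norm_eq]
    congr 1
    refine Finset.sum_congr rfl fun i _ => ?_
    rw [Real.norm_eq_abs, sq_abs, happ i]
  have hx : ‖x‖^2 = ∑ j, x j ^ 2 := by
    rw [EuclideanSpace.norm_eq, Real.sq_sqrt (by positivity)]
    refine Finset.sum_congr rfl fun j _ => ?_
    rw [Real.norm_eq_abs, sq_abs]
  have key : ∀ i, (∑ j, A i j * x j)^2 ≤ R * ∑ j, |A i j| * x j^2 := by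
    intro i
    have h1 : (∑ j, A i j * x j)^2 ≤ (∑ j, |A i j| * |x j|)^2 := by
      rw [← sq_abs]
      apply pow_le_pow_left₀ (abs_nonneg _)
      calc |∑ j, A i j * x j| ≤ ∑ j, |A i j * x j| := Finset.abs_sum_le_sum_abs _ _
        _ = ∑ j, |A i j| * |x j| := by simp [abs_mul]
    have h2 : (∑ j, |A i j| * |x j|)^2 ≤ (∑ j, |A i j|) * ∑ j, |A i j| * x j^2 :=
      Finset.sum_sq_le_sum_mul_sum_of_sq_eq_mul _ (fun j _ => abs_nonneg _)
        (fun j _ => by positivity) (fun j _ => by simp only [mul_pow, sq_abs, ← mul_assoc, abs_mul_abs_self]; ring)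
    refine h1.trans (h2.trans ?_)
    exact mul_le_mul_of_nonneg_right (hrow i) (Finset.sum_nonneg fun j _ => by positivity)
  have main : ∑ i, (∑ j, A i j * x j)^2 ≤ (R * ‖x‖)^2 := by
    calc ∑ i, (∑ j, A i j * x j)^2 ≤ ∑ i, (R * ∑ j, |A i j| * x j^2) :=
          Finset.sum_le_sum fun i _ => key i
      _ = R * ∑ j, (∑ i, |A i j|) * x j^2 := by
          rw [← Finset.mul_sum, Finset.sum_comm]
          congr 1
          refine Finset.sum_congr rfl fun j _ => ?_
          rw [Finset.sum_mul]
      _ ≤ R * ∑ j, R * x j^2 := by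
          apply mul_le_mul_of_nonneg_left _ hR
          exact Finset.sum_le_sum fun j _ =>
            mul_le_mul_of_nonneg_right (hcol j) (sq_nonneg _)
      _ = (R * ‖x‖)^2 := by rw [← Finset.mul_sum, ← hx]; ring
  rw [hnorm]
  calc Real.sqrt (∑ i, (∑ j, A i j * x j)^2) ≤ Real.sqrt ((R * ‖x‖)^2) :=
        Real.sqrt_le_sqrt main
    _ = R * ‖x‖ := Real.sqrt_sq (by positivity)

lemma sum_ite_le {N : ℕ} {v : ℝ} (hv : 0 ≤ v) (P : ℕ → Prop) [DecidablePred P] (m0 : ℕ)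
    (hP : ∀ j, P j → j = m0) :
    ∑ p : Fin N, (if P (p : ℕ) then v else 0) ≤ v := by
  calc ∑ p : Fin N, (if P (p : ℕ) then v else 0)
      ≤ ∑ p : Fin N, (if (p : ℕ) = m0 then v else 0) := by
        refine Finset.sum_le_sum fun p _ => ?_
        by_cases hp : P (p : ℕ)
        · rw [if_pos hp, if_pos (hP _ hp)]
        · rw [if_neg hp]; split_ifs; exacts [hv, le_rfl]
    _ = ∑ j ∈ Finset.range N, (if j = m0 then v else 0) :=
        Fin.sum_univ_eq_sum_range (fun j => if j = m0 then v else 0) N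
    _ ≤ v := by rw [Finset.sum_ite_eq']; split <;> simp [hv]

lemma tridiag_abs_le {N : ℕ} {h : ℕ → ℝ} {m : ℝ} (hm : 0 < m)
    (hh : ∀ j ≤ N, m ≤ h j) (i p : Fin N) :
    |tridiag N h i p| ≤ (if (i : ℕ) = (p : ℕ) then 2 / m ^ 2 else 0)
      + (if (i : ℕ) = (p : ℕ) + 1 then 1 / m ^ 2 else 0)
      + (if (p : ℕ) = (i : ℕ) + 1 then 1 / m ^ 2 else 0) := by
  have hi : m ≤ h i := hh _ i.2.le
  have hi1 : m ≤ h ((i : ℕ) + 1) := hh _ i.2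
  have h0i : (0:ℝ) < h i := lt_of_lt_of_le hm hi
  have h0i1 : (0:ℝ) < h ((i:ℕ)+1) := lt_of_lt_of_le hm hi1
  rw [tridiag]
  simp only [Matrix.of_apply]
  by_cases c1 : (i : ℕ) = (p : ℕ)
  · have c2 : ¬ ((i:ℕ) = (p:ℕ)+1) := by omega
    have c3 : ¬ ((p:ℕ) = (i:ℕ)+1) := by omega
    rw [if_pos c1, if_pos c1, if_neg c2, if_neg c3, add_zero, add_zero]
    rw [abs_div, abs_neg, abs_two, abs_of_pos (by positivity)]
    rw [div_le_div_iff₀ (by positivity) (by positivity)]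
    nlinarith [mul_le_mul hi hi1 hm.le h0i.le]
  · by_cases c2 : (i:ℕ) = (p:ℕ)+1
    · have c3 : ¬ ((p:ℕ) = (i:ℕ)+1) := by omega
      rw [if_neg c1, if_pos c2, if_neg c1, if_pos c2, if_neg c3, zero_add, add_zero]
      rw [abs_of_pos (by positivity)]
      rw [div_le_div_iff₀ (by positivity) (by positivity)]
      nlinarith [mul_le_mul hi (add_le_add hi hi1) (by positivity) h0i.le]
    · by_cases c3 : (p:ℕ) = (i:ℕ)+1
      · rw [if_neg c1, if_neg c2, if_pos c3, if_neg c1, if_neg c2, if_pos c3, zero_add, zero_add]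
        rw [abs_of_pos (by positivity)]
        rw [div_le_div_iff₀ (by positivity) (by positivity)]
        nlinarith [mul_le_mul hi1 (add_le_add hi hi1) (by positivity) h0i1.le]
      · rw [if_neg c1, if_neg c2, if_neg c3, if_neg c1, if_neg c2, if_neg c3]
        simp

lemma tridiag_row_sum {N : ℕ} {h : ℕ → ℝ} {m : ℝ} (hm : 0 < m)
    (hh : ∀ j ≤ N, m ≤ h j) (i : Fin N) :
    ∑ p, |tridiag N h i p| ≤ 4 / m ^ 2 := by
  calc ∑ p, |tridiag N h i p|
      ≤ ∑ p : Fin N, ((if (i : ℕ) = (p : ℕ) then 2 / m ^ 2 else 0)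
        + (if (i : ℕ) = (p : ℕ) + 1 then 1 / m ^ 2 else 0)
        + (if (p : ℕ) = (i : ℕ) + 1 then 1 / m ^ 2 else 0)) :=
        Finset.sum_le_sum fun p _ => tridiag_abs_le hm hh i p
    _ = (∑ p : Fin N, if (i : ℕ) = (p : ℕ) then 2 / m ^ 2 else 0)
        + (∑ p : Fin N, if (i : ℕ) = (p : ℕ) + 1 then 1 / m ^ 2 else 0)
        + (∑ p : Fin N, if (p : ℕ) = (i : ℕ) + 1 then 1 / m ^ 2 else 0) := by
        rw [Finset.sum_add_distrib, Finset.sum_add_distrib]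
    _ ≤ 2 / m ^ 2 + 1 / m ^ 2 + 1 / m ^ 2 := by
        refine add_le_add (add_le_add ?_ ?_) ?_
        · exact sum_ite_le (by positivity) (fun j => (i : ℕ) = j) (i : ℕ) (fun j hj => hj.symm)
        · exact sum_ite_le (by positivity) (fun j => (i : ℕ) = j + 1) ((i : ℕ) - 1)
            (fun j hj => by omega)
        · exact sum_ite_le (by positivity) (fun j => j = (i : ℕ) + 1) ((i : ℕ) + 1) (fun j hj => hj)
    _ = 4 / m ^ 2 := by ring

lemma tridiag_col_sum {N : ℕ} {h : ℕ → ℝ} {m : ℝ} (hm : 0 < m)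
    (hh : ∀ j ≤ N, m ≤ h j) (p : Fin N) :
    ∑ i, |tridiag N h i p| ≤ 4 / m ^ 2 := by
  calc ∑ i, |tridiag N h i p|
      ≤ ∑ i : Fin N, ((if (i : ℕ) = (p : ℕ) then 2 / m ^ 2 else 0)
        + (if (i : ℕ) = (p : ℕ) + 1 then 1 / m ^ 2 else 0)
        + (if (p : ℕ) = (i : ℕ) + 1 then 1 / m ^ 2 else 0)) :=
        Finset.sum_le_sum fun i _ => tridiag_abs_le hm hh i p
    _ = (∑ i : Fin N, if (i : ℕ) = (p : ℕ) then 2 / m ^ 2 else 0)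
        + (∑ i : Fin N, if (i : ℕ) = (p : ℕ) + 1 then 1 / m ^ 2 else 0)
        + (∑ i : Fin N, if (p : ℕ) = (i : ℕ) + 1 then 1 / m ^ 2 else 0) := by
        rw [Finset.sum_add_distrib, Finset.sum_add_distrib]
    _ ≤ 2 / m ^ 2 + 1 / m ^ 2 + 1 / m ^ 2 := by
        refine add_le_add (add_le_add ?_ ?_) ?_
        · exact sum_ite_le (by positivity) (fun j => j = (p : ℕ)) (p : ℕ) (fun j hj => hj)
        · exact sum_ite_le (by positivity) (fun j => j = (p : ℕ) + 1) ((p : ℕ) + 1) (fun j hj => hj)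
        · exact sum_ite_le (by positivity) (fun j => (p : ℕ) = j + 1) ((p : ℕ) - 1)
            (fun j hj => by omega)
    _ = 4 / m ^ 2 := by ring


lemma kron1_row {N1 N2 N3 : ℕ} (T : Matrix (Fin N1) (Fin N1) ℝ) (p : Idx N1 N2 N3) :
    ∑ r : Idx N1 N2 N3,
      |((1 : Matrix (Fin N3) (Fin N3) ℝ) ⊗ₖ ((1 : Matrix (Fin N2) (Fin N2) ℝ) ⊗ₖ T)) p r|
      = ∑ i, |T p.2.2 i| := by
  simp [Fintype.sum_prod_type, Matrix.kroneckerMap_apply, Matrix.one_apply, abs_mul,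
    apply_ite abs, ite_mul, Finset.sum_ite_eq]

lemma kron1_col {N1 N2 N3 : ℕ} (T : Matrix (Fin N1) (Fin N1) ℝ) (r : Idx N1 N2 N3) :
    ∑ p : Idx N1 N2 N3,
      |((1 : Matrix (Fin N3) (Fin N3) ℝ) ⊗ₖ ((1 : Matrix (Fin N2) (Fin N2) ℝ) ⊗ₖ T)) p r|
      = ∑ i, |T i r.2.2| := by
  simp [Fintype.sum_prod_type, Matrix.kroneckerMap_apply, Matrix.one_apply, abs_mul,
    apply_ite abs, ite_mul, Finset.sum_ite_eq']

lemma kron2_row {N1 N2 N3 : ℕ} (T : Matrix (Fin N2) (Fin N2) ℝ) (p : Idx N1 N2 N3) :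
    ∑ r : Idx N1 N2 N3,
      |((1 : Matrix (Fin N3) (Fin N3) ℝ) ⊗ₖ (T ⊗ₖ (1 : Matrix (Fin N1) (Fin N1) ℝ))) p r|
      = ∑ j, |T p.2.1 j| := by
  simp [Fintype.sum_prod_type, Matrix.kroneckerMap_apply, Matrix.one_apply, abs_mul,
    apply_ite abs, ite_mul, mul_ite, Finset.sum_ite_eq]

lemma kron2_col {N1 N2 N3 : ℕ} (T : Matrix (Fin N2) (Fin N2) ℝ) (r : Idx N1 N2 N3) :
    ∑ p : Idx N1 N2 N3,
      |((1 : Matrix (Fin N3) (Fin N3) ℝ) ⊗ₖ (T ⊗ₖ (1 : Matrix (Fin N1) (Fin N1) ℝ))) p r|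
      = ∑ j, |T j r.2.1| := by
  simp [Fintype.sum_prod_type, Matrix.kroneckerMap_apply, Matrix.one_apply, abs_mul,
    apply_ite abs, ite_mul, mul_ite, Finset.sum_ite_eq']

lemma kron3_row {N1 N2 N3 : ℕ} (T : Matrix (Fin N3) (Fin N3) ℝ) (p : Idx N1 N2 N3) :
    ∑ r : Idx N1 N2 N3,
      |(T ⊗ₖ ((1 : Matrix (Fin N2) (Fin N2) ℝ) ⊗ₖ (1 : Matrix (Fin N1) (Fin N1) ℝ))) p r|
      = ∑ k, |T p.1 k| := by
  simp [Fintype.sum_prod_type, Matrix.kroneckerMap_apply, Matrix.one_apply, abs_mul,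
    apply_ite abs, ite_mul, mul_ite, Finset.sum_ite_eq]

lemma kron3_col {N1 N2 N3 : ℕ} (T : Matrix (Fin N3) (Fin N3) ℝ) (r : Idx N1 N2 N3) :
    ∑ p : Idx N1 N2 N3,
      |(T ⊗ₖ ((1 : Matrix (Fin N2) (Fin N2) ℝ) ⊗ₖ (1 : Matrix (Fin N1) (Fin N1) ℝ))) p r|
      = ∑ k, |T k r.1| := by
  simp [Fintype.sum_prod_type, Matrix.kroneckerMap_apply, Matrix.one_apply, abs_mul,
    apply_ite abs, ite_mul, mul_ite, Finset.sum_ite_eq']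



lemma dirMin_le {N : ℕ} (h : ℕ → ℝ) {j : ℕ} (hj : j ≤ N) : dirMin N h ≤ h j :=
  Finset.inf'_le _ (Finset.mem_range.mpr (by omega))

lemma dirMin_pos {N : ℕ} {h : ℕ → ℝ} (hp : ∀ j ≤ N, 0 < h j) : 0 < dirMin N h := by
  rw [dirMin, Finset.lt_inf'_iff]
  intro j hj
  exact hp j (by have := Finset.mem_range.mp hj; omega)

lemma le_phiVec {N1 N2 N3 : ℕ} {a b c q : ℝ} (ha : 0 < a) (hb : 0 < b) (hc : 0 < c)
    (hq : 0 ≤ q) {h1 h2 h3 : ℕ → ℝ}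
    (hp1 : ∀ j ≤ N1, 0 < h1 j) (hp2 : ∀ j ≤ N2, 0 < h2 j) (hp3 : ∀ j ≤ N3, 0 < h3 j)
    (p : Idx N1 N2 N3) :
    (a ^ 2 * h1 0 ^ 2 + b ^ 2 * h2 0 ^ 2 + c ^ 2 * h3 0 ^ 2) ^ (q / 2)
      ≤ phiVec N1 N2 N3 a b c q h1 h2 h3 p := by
  have hs1 : h1 0 ≤ ∑ ℓ ∈ Finset.range ((p.2.2 : ℕ) + 1), h1 ℓ := by
    refine Finset.single_le_sum (f := h1) (fun ℓ hℓ => ?_) (Finset.mem_range.mpr (Nat.succ_pos _))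
    have h' := Finset.mem_range.mp hℓ
    have h'' := p.2.2.isLt
    exact (hp1 ℓ (by omega)).le
  have hs2 : h2 0 ≤ ∑ ℓ ∈ Finset.range ((p.2.1 : ℕ) + 1), h2 ℓ := by
    refine Finset.single_le_sum (f := h2) (fun ℓ hℓ => ?_) (Finset.mem_range.mpr (Nat.succ_pos _))
    have h' := Finset.mem_range.mp hℓ
    have h'' := p.2.1.isLt
    exact (hp2 ℓ (by omega)).le
  have hs3 : h3 0 ≤ ∑ ℓ ∈ Finset.range ((p.1 : ℕ) + 1), h3 ℓ := by
    refine Finset.single_le_sum (f := h3) (fun ℓ hℓ => ?_) (Finset.mem_range.mpr (Nat.succ_pos _))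
    have h' := Finset.mem_range.mp hℓ
    have h'' := p.1.isLt
    exact (hp3 ℓ (by omega)).le
  have h10 : 0 ≤ h1 0 := (hp1 0 (Nat.zero_le _)).le
  have h20 : 0 ≤ h2 0 := (hp2 0 (Nat.zero_le _)).le
  have h30 : 0 ≤ h3 0 := (hp3 0 (Nat.zero_le _)).le
  unfold phiVec phi
  apply Real.rpow_le_rpow (by positivity) ?_ (by linarith)
  gcongr <;> first | exact h10 | exact h20 | exact h30 | exact hs1 | exact hs2 | exact hs3

lemma specNorm_diag_mul_le {ι : Type*} [Fintype ι] [DecidableEq ι]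
    (d : ι → ℝ) (K : Matrix ι ι ℝ) (s C D : ℝ)
    (hs : 0 ≤ s) (hC : 0 ≤ C) (hD : 0 ≤ D)
    (hd : ∀ p, 0 ≤ d p) (hdD : ∀ p, d p ≤ D)
    (hrow : ∀ p, ∑ r, |K p r| ≤ C) (hcol : ∀ r, ∑ p, |K p r| ≤ C) :
    specNorm (s • (Matrix.diagonal d * K)) ≤ s * D * C := by
  have he : ∀ p r, |(s • (Matrix.diagonal d * K)) p r| = s * (d p * |K p r|) := by
    intro p r
    rw [Matrix.smul_apply, Matrix.diagonal_mul, smul_eq_mul, abs_mul, abs_mul,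
      abs_of_nonneg hs, abs_of_nonneg (hd p)]
  apply specNorm_le_of_bounds _ _ (by positivity)
  · intro p
    calc ∑ r, |(s • (Matrix.diagonal d * K)) p r| = s * (d p * ∑ r, |K p r|) := by
          simp only [he, Finset.mul_sum]
      _ ≤ s * (D * C) := by
          apply mul_le_mul_of_nonneg_left _ hs
          exact mul_le_mul (hdD p) (hrow p) (Finset.sum_nonneg fun r _ => abs_nonneg _) hD
      _ = s * D * C := by ring
  · intro r
    calc ∑ p, |(s • (Matrix.diagonal d * K)) p r| = s * ∑ p, d p * |K p r| := by
          simp only [he, Finset.mul_sum]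
      _ ≤ s * ∑ p, D * |K p r| := by
          apply mul_le_mul_of_nonneg_left _ hs
          exact Finset.sum_le_sum fun p _ => mul_le_mul_of_nonneg_right (hdD p) (abs_nonneg _)
      _ = s * (D * ∑ p, |K p r|) := by rw [← Finset.mul_sum]
      _ ≤ s * (D * C) := by
          apply mul_le_mul_of_nonneg_left _ hs
          exact mul_le_mul_of_nonneg_left (hcol r) hD
      _ = s * D * C := by ring

/-- under the CFL condition, `‖(τ/2)M_σ‖₂ < 1` for `σ = 1,2,3`. -/
theorem statement1 (n1 n2 n3 : ℕ) (a b c q : ℝ)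
    (ha : 0 < a) (hb : 0 < b) (hc : 0 < c) (hq0 : 0 ≤ q) (hq2 : q ≤ 2)
    (h1 h2 h3 : ℕ → ℝ)
    (hpos1 : ∀ j ≤ n1 + 2, 0 < h1 j)
    (hpos2 : ∀ j ≤ n2 + 2, 0 < h2 j)
    (hpos3 : ∀ j ≤ n3 + 2, 0 < h3 j)
    (τ : ℝ) (hτ : 0 < τ) (hCFL : CFL (n1 + 2) (n2 + 2) (n3 + 2) a b c q h1 h2 h3 τ) :
    ∀ σ : Fin 3, specNorm ((τ / 2) • Mmat (n1 + 2) (n2 + 2) (n3 + 2) a b c q h1 h2 h3 σ) < 1 := by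
  have hm0 : 0 < meshMin (n1 + 2) (n2 + 2) (n3 + 2) h1 h2 h3 :=
    lt_min (dirMin_pos hpos1) (lt_min (dirMin_pos hpos2) (dirMin_pos hpos3))
  set m := meshMin (n1 + 2) (n2 + 2) (n3 + 2) h1 h2 h3 with hmdef
  have hm1 : ∀ j ≤ n1 + 2, m ≤ h1 j := fun j hj => (min_le_left _ _).trans (dirMin_le h1 hj)
  have hm2 : ∀ j ≤ n2 + 2, m ≤ h2 j := fun j hj =>
    ((min_le_right _ _).trans (min_le_left _ _)).trans (dirMin_le h2 hj)
  have hm3 : ∀ j ≤ n3 + 2, m ≤ h3 j := fun j hj =>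
    ((min_le_right _ _).trans (min_le_right _ _)).trans (dirMin_le h3 hj)
  set Φ0 : ℝ := (a ^ 2 * h1 0 ^ 2 + b ^ 2 * h2 0 ^ 2 + c ^ 2 * h3 0 ^ 2) ^ (q / 2) with hΦdef
  have hΦ0 : 0 < Φ0 := by
    have h10 := hpos1 0 (Nat.zero_le _)
    have h20 := hpos2 0 (Nat.zero_le _)
    have h30 := hpos3 0 (Nat.zero_le _)
    exact Real.rpow_pos_of_pos (by positivity) _
  have hφge : ∀ p : Idx (n1 + 2) (n2 + 2) (n3 + 2),
      Φ0 ≤ phiVec (n1 + 2) (n2 + 2) (n3 + 2) a b c q h1 h2 h3 p :=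
    fun p => le_phiVec ha hb hc hq0 hpos1 hpos2 hpos3 p
  have hφpos : ∀ p : Idx (n1 + 2) (n2 + 2) (n3 + 2),
      0 < phiVec (n1 + 2) (n2 + 2) (n3 + 2) a b c q h1 h2 h3 p :=
    fun p => lt_of_lt_of_le hΦ0 (hφge p)
  have hφinv : ∀ p : Idx (n1 + 2) (n2 + 2) (n3 + 2),
      (phiVec (n1 + 2) (n2 + 2) (n3 + 2) a b c q h1 h2 h3 p)⁻¹ ≤ Φ0⁻¹ :=
    fun p => inv_anti₀ hΦ0 (hφge p)
  have hφinv0 : ∀ p : Idx (n1 + 2) (n2 + 2) (n3 + 2),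
      0 ≤ (phiVec (n1 + 2) (n2 + 2) (n3 + 2) a b c q h1 h2 h3 p)⁻¹ :=
    fun p => (inv_nonneg).mpr (hφpos p).le
  have hβ : betaMin (n1 + 2) (n2 + 2) (n3 + 2) a b c q h1 h2 h3 = m ^ 2 / 2 * Φ0 := rfl
  have hβpos : 0 < betaMin (n1 + 2) (n2 + 2) (n3 + 2) a b c q h1 h2 h3 := by
    rw [hβ]; positivity
  have hmne : m ≠ 0 := hm0.ne'
  have hΦne : Φ0 ≠ 0 := hΦ0.ne'
  have hC0 : (0:ℝ) ≤ 4 / m ^ 2 := by positivity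
  have hD0 : (0:ℝ) ≤ Φ0⁻¹ := (inv_nonneg).mpr hΦ0.le
  have key : ∀ e : ℝ, 0 < e → min (a ^ 2) (min (b ^ 2) (c ^ 2)) ≤ e ^ 2 →
      τ / 2 * (e ^ 2)⁻¹ * Φ0⁻¹ * (4 / m ^ 2) < 1 := by
    intro e he hmin
    have heq : τ / 2 * (e ^ 2)⁻¹ * Φ0⁻¹ * (4 / m ^ 2)
        = τ / (e ^ 2 * betaMin (n1 + 2) (n2 + 2) (n3 + 2) a b c q h1 h2 h3) := by
      rw [hβ]
      have hene : e ≠ 0 := he.ne'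
      field_simp
      ring
    rw [heq, div_lt_one (by positivity)]
    have h' : τ / betaMin (n1 + 2) (n2 + 2) (n3 + 2) a b c q h1 h2 h3 < e ^ 2 :=
      lt_of_lt_of_le hCFL hmin
    calc τ = τ / betaMin (n1 + 2) (n2 + 2) (n3 + 2) a b c q h1 h2 h3
            * betaMin (n1 + 2) (n2 + 2) (n3 + 2) a b c q h1 h2 h3 := by
          field_simp
      _ < e ^ 2 * betaMin (n1 + 2) (n2 + 2) (n3 + 2) a b c q h1 h2 h3 :=
          mul_lt_mul_of_pos_right h' hβpos
  have hτ2 : (0:ℝ) ≤ τ / 2 := by linarith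
  intro σ
  fin_cases σ
  · have hM : (τ / 2) • Mmat (n1 + 2) (n2 + 2) (n3 + 2) a b c q h1 h2 h3 0
        = (τ / 2 * (a ^ 2)⁻¹) •
          (Matrix.diagonal (fun p => (phiVec (n1 + 2) (n2 + 2) (n3 + 2) a b c q h1 h2 h3 p)⁻¹) *
            ((1 : Matrix (Fin (n3 + 2)) (Fin (n3 + 2)) ℝ) ⊗ₖ
              ((1 : Matrix (Fin (n2 + 2)) (Fin (n2 + 2)) ℝ) ⊗ₖ tridiag (n1 + 2) h1))) := by
      simp [Mmat, Bdiag, smul_smul]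
    rw [show ((⟨0, by norm_num⟩ : Fin 3) = (0 : Fin 3)) from rfl, hM]
    refine lt_of_le_of_lt (specNorm_diag_mul_le _ _ _ _ _
      (by positivity) hC0 hD0 hφinv0 hφinv
      (fun p => by rw [kron1_row]; exact tridiag_row_sum hm0 hm1 p.2.2)
      (fun r => by rw [kron1_col]; exact tridiag_col_sum hm0 hm1 r.2.2)) ?_
    exact key a ha (min_le_left _ _)
  · have hM : (τ / 2) • Mmat (n1 + 2) (n2 + 2) (n3 + 2) a b c q h1 h2 h3 1
        = (τ / 2 * (b ^ 2)⁻¹) •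
          (Matrix.diagonal (fun p => (phiVec (n1 + 2) (n2 + 2) (n3 + 2) a b c q h1 h2 h3 p)⁻¹) *
            ((1 : Matrix (Fin (n3 + 2)) (Fin (n3 + 2)) ℝ) ⊗ₖ
              (tridiag (n2 + 2) h2 ⊗ₖ (1 : Matrix (Fin (n1 + 2)) (Fin (n1 + 2)) ℝ)))) := by
      simp [Mmat, Bdiag, smul_smul]
    rw [show ((⟨1, by norm_num⟩ : Fin 3) = (1 : Fin 3)) from rfl, hM]
    refine lt_of_le_of_lt (specNorm_diag_mul_le _ _ _ _ _
      (by positivity) hC0 hD0 hφinv0 hφinv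
      (fun p => by rw [kron2_row]; exact tridiag_row_sum hm0 hm2 p.2.1)
      (fun r => by rw [kron2_col]; exact tridiag_col_sum hm0 hm2 r.2.1)) ?_
    exact key b hb ((min_le_right _ _).trans (min_le_left _ _))
  · have hM : (τ / 2) • Mmat (n1 + 2) (n2 + 2) (n3 + 2) a b c q h1 h2 h3 2
        = (τ / 2 * (c ^ 2)⁻¹) •
          (Matrix.diagonal (fun p => (phiVec (n1 + 2) (n2 + 2) (n3 + 2) a b c q h1 h2 h3 p)⁻¹) *
            (tridiag (n3 + 2) h3 ⊗ₖ
              ((1 : Matrix (Fin (n2 + 2)) (Fin (n2 + 2)) ℝ) ⊗ₖ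
                (1 : Matrix (Fin (n1 + 2)) (Fin (n1 + 2)) ℝ)))) := by
      simp [Mmat, Bdiag, smul_smul]
    rw [show ((⟨2, by norm_num⟩ : Fin 3) = (2 : Fin 3)) from rfl, hM]
    refine lt_of_le_of_lt (specNorm_diag_mul_le _ _ _ _ _
      (by positivity) hC0 hD0 hφinv0 hφinv
      (fun p => by rw [kron3_row]; exact tridiag_row_sum hm0 hm3 p.1)
      (fun r => by rw [kron3_col]; exact tridiag_col_sum hm0 hm3 r.1)) ?_
    exact key c hc ((min_le_right _ _).trans (min_le_right _ _))


end Kawarada
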